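/- arXiv:1607.06138 — 2 statements merged into one kernel-verified Lean document; each statement's English description precedes it below -/
import Mathlib

section
/- Let T = {0,1} and L contain H^p_t with f violating H^p_t at cell (i,j) (so f(i,j) = f(i-1,j) = f(i-2,j) = t, using p ≥ 2), and suppose setting f(i,j) = 1-t would violate some vertical condition V^q_{1-t} at (i,j); then f(i,j-1) = f(i,j-2) = 1-t. Moreover: (a) if f(i-1,j-1) = t, then changing f(i-1,j) to 1-t creates no violation of any condition in L at any cell (i',j') with i'+j' ≤ i+j other than possibly removing the one at (i,j); (b) if f(i-1,j-1) = 1-t, then setting f(i,j) = 1-t and f(i,j-1) = t creates no violation at (i-1,j) or (i,j-1). -/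
def vioH (f : ℕ → ℕ → Fin 2) (p : ℕ) (t : Fin 2) (i j : ℕ) : Prop :=
  p ≤ i ∧ ∀ s ≤ p, f (i - s) j = t

def vioV (f : ℕ → ℕ → Fin 2) (q : ℕ) (t : Fin 2) (i j : ℕ) : Prop :=
  q ≤ j ∧ ∀ s ≤ q, f i (j - s) = t

/-- `f` violates some condition of `L = {H^{p(t)}_t, V^{q(t)}_t}` at `(i,j)`. -/
def vioAny (p q : Fin 2 → ℕ) (f : ℕ → ℕ → Fin 2) (i j : ℕ) : Prop :=
  ∃ t : Fin 2, vioH f (p t) t i j ∨ vioV f (q t) t i j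

/-- The tiling obtained from `f` by putting the value `v` at cell `(a,b)`. -/
def upd (f : ℕ → ℕ → Fin 2) (a b : ℕ) (v : Fin 2) : ℕ → ℕ → Fin 2 :=
  fun i j => if i = a ∧ j = b then v else f i j

lemma upd_ne (f : ℕ → ℕ → Fin 2) (a b : ℕ) (v : Fin 2) (i j : ℕ)
    (h : ¬(i = a ∧ j = b)) : upd f a b v i j = f i j := if_neg h

@[simp] lemma upd_self (f : ℕ → ℕ → Fin 2) (a b : ℕ) (v : Fin 2) :
    upd f a b v a b = v := if_pos ⟨rfl, rfl⟩

/-- Correctness of the local surgery step (II). -/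
theorem stmt5 (m n : ℕ) (p q : Fin 2 → ℕ)
    (hp : ∀ t, 2 ≤ p t) (hq : ∀ t, 2 ≤ q t)
    (f : ℕ → ℕ → Fin 2) (t : Fin 2) (i j : ℕ) (him : i < m) (hjn : j < n)
    (hvio : vioH f (p t) t i j)
    (hflip : vioAny p q (upd f i j (1 - t)) i j) :
    (f i (j-1) = 1 - t ∧ f i (j-2) = 1 - t) ∧
    (f (i-1) (j-1) = t →
      ∀ i' j', i' < m → j' < n → i' + j' ≤ i + j →
        vioAny p q (upd f (i-1) j (1 - t)) i' j' →
          vioAny p q f i' j' ∧ (i', j') ≠ (i, j)) ∧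
    (f (i-1) (j-1) = 1 - t →
      (vioAny p q (upd (upd f i j (1 - t)) i (j-1) t) (i-1) j →
        vioAny p q f (i-1) j) ∧
      ¬ vioAny p q (upd (upd f i j (1 - t)) i (j-1) t) i (j-1)) := by
  have hne : ∀ u : Fin 2, (1 - u) ≠ u := by decide
  obtain ⟨hpi, hH⟩ := hvio
  have hi2 : 2 ≤ i := (hp t).trans hpi
  have hfij : f i j = t := by simpa using hH 0 (Nat.zero_le _)
  have hfi1 : f (i-1) j = t := hH 1 (by have := hp t; omega)
  have hfi2 : f (i-2) j = t := hH 2 (hp t)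
  have key : 2 ≤ j ∧ f i (j-1) = 1 - t ∧ f i (j-2) = 1 - t := by
    obtain ⟨u, hu | hu⟩ := hflip
    · exfalso
      obtain ⟨h1, h2⟩ := hu
      have e0 : (1 - t : Fin 2) = u := by
        simpa using h2 0 (Nat.zero_le _)
      have e1 := h2 1 (by have := hp u; omega)
      rw [upd_ne f i j (1-t) (i-1) j (by omega), hfi1] at e1
      exact hne t (e0.trans e1.symm)
    · obtain ⟨h1, h2⟩ := hu
      have hj2 : 2 ≤ j := (hq u).trans h1
      have e0 : (1 - t : Fin 2) = u := by
        simpa using h2 0 (Nat.zero_le _)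
      have e1 := h2 1 (by have := hq u; omega)
      rw [upd_ne f i j (1-t) i (j-1) (by omega)] at e1
      have e2 := h2 2 (hq u)
      rw [upd_ne f i j (1-t) i (j-2) (by omega)] at e2
      exact ⟨hj2, by rw [e1, ← e0], by rw [e2, ← e0]⟩
  obtain ⟨hj2, hA, hB⟩ := key
  refine ⟨⟨hA, hB⟩, ?_, ?_⟩
  · -- part (a)
    intro hd i' j' hi'm hj'n hsum hvv
    obtain ⟨v, hv | hv⟩ := hvv
    · obtain ⟨hle, hall⟩ := hv
      by_cases hjj : j' = j
      · have htri : i' ≤ i - 2 ∨ i' = i - 1 ∨ i' = i := by omega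
        rcases htri with h | h | h
        · refine ⟨⟨v, Or.inl ⟨hle, fun s hs => ?_⟩⟩,
            by simp only [ne_eq, Prod.mk.injEq]; omega⟩
          have := hall s hs
          rwa [upd_ne f (i-1) j (1-t) (i'-s) j' (by omega)] at this
        · exfalso
          have e0 := hall 0 (Nat.zero_le _)
          rw [Nat.sub_zero, h, hjj, upd_self] at e0
          have e1 := hall 1 (by have := hp v; omega)
          rw [h, hjj, show i-1-1 = i-2 by omega,
            upd_ne f (i-1) j (1-t) (i-2) j (by omega), hfi2] at e1
          exact hne t (e0.trans e1.symm)
        · exfalso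
          have e0 := hall 0 (Nat.zero_le _)
          rw [Nat.sub_zero, h, hjj,
            upd_ne f (i-1) j (1-t) i j (by omega), hfij] at e0
          have e1 := hall 1 (by have := hp v; omega)
          rw [h, hjj, upd_self] at e1
          exact hne t (e1.trans e0.symm)
      · refine ⟨⟨v, Or.inl ⟨hle, fun s hs => ?_⟩⟩,
          by simp only [ne_eq, Prod.mk.injEq]; omega⟩
        have := hall s hs
        rwa [upd_ne f (i-1) j (1-t) (i'-s) j' (by omega)] at this
    · obtain ⟨hle, hall⟩ := hv
      by_cases hii : i' = i - 1
      · have htri : j' ≤ j - 1 ∨ j' = j ∨ j' = j + 1 := by omega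
        rcases htri with h | h | h
        · refine ⟨⟨v, Or.inr ⟨hle, fun s hs => ?_⟩⟩,
            by simp only [ne_eq, Prod.mk.injEq]; omega⟩
          have := hall s hs
          rwa [upd_ne f (i-1) j (1-t) i' (j'-s) (by omega)] at this
        · exfalso
          have e0 := hall 0 (Nat.zero_le _)
          rw [Nat.sub_zero, h, hii, upd_self] at e0
          have e1 := hall 1 (by have := hq v; omega)
          rw [h, hii, upd_ne f (i-1) j (1-t) (i-1) (j-1) (by omega), hd] at e1
          exact hne t (e0.trans e1.symm)
        · exfalso
          have e1 := hall 1 (by have := hq v; omega)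
          rw [h, hii, show j+1-1 = j by omega, upd_self] at e1
          have e2 := hall 2 (hq v)
          rw [h, hii, show j+1-2 = j-1 by omega,
            upd_ne f (i-1) j (1-t) (i-1) (j-1) (by omega), hd] at e2
          exact hne t (e1.trans e2.symm)
      · refine ⟨⟨v, Or.inr ⟨hle, fun s hs => ?_⟩⟩, ?_⟩
        · have := hall s hs
          rwa [upd_ne f (i-1) j (1-t) i' (j'-s) (by omega)] at this
        · intro hc
          simp only [Prod.mk.injEq] at hc
          obtain ⟨h1, h2⟩ := hc
          have e0 := hall 0 (Nat.zero_le _)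
          rw [Nat.sub_zero, h1, h2,
            upd_ne f (i-1) j (1-t) i j (by omega), hfij] at e0
          have e1 := hall 1 (by have := hq v; omega)
          rw [h1, h2, upd_ne f (i-1) j (1-t) i (j-1) (by omega), hA] at e1
          exact hne t (e1.trans e0.symm)
  · -- part (b)
    intro hd
    constructor
    · intro hvv
      obtain ⟨v, hv | hv⟩ := hvv
      · obtain ⟨hle, hall⟩ := hv
        refine ⟨v, Or.inl ⟨hle, fun s hs => ?_⟩⟩
        have := hall s hs
        rwa [upd_ne (upd f i j (1-t)) i (j-1) t (i-1-s) j (by omega),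
          upd_ne f i j (1-t) (i-1-s) j (by omega)] at this
      · obtain ⟨hle, hall⟩ := hv
        refine ⟨v, Or.inr ⟨hle, fun s hs => ?_⟩⟩
        have := hall s hs
        rwa [upd_ne (upd f i j (1-t)) i (j-1) t (i-1) (j-s) (by omega),
          upd_ne f i j (1-t) (i-1) (j-s) (by omega)] at this
    · intro hvv
      obtain ⟨v, hv | hv⟩ := hvv
      · obtain ⟨hle, hall⟩ := hv
        have e0 : (t : Fin 2) = v := by
          simpa using hall 0 (Nat.zero_le _)
        have e1 := hall 1 (by have := hp v; omega)
        rw [upd_ne (upd f i j (1-t)) i (j-1) t (i-1) (j-1) (by omega),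
          upd_ne f i j (1-t) (i-1) (j-1) (by omega), hd] at e1
        exact hne t (e1.trans e0.symm)
      · obtain ⟨hle, hall⟩ := hv
        have e0 : (t : Fin 2) = v := by
          simpa using hall 0 (Nat.zero_le _)
        have e1 := hall 1 (by have := hq v; omega)
        rw [show j-1-1 = j-2 by omega,
          upd_ne (upd f i j (1-t)) i (j-1) t i (j-2) (by omega),
          upd_ne f i j (1-t) i (j-2) (by omega), hB] at e1
        exact hne t (e1.trans e0.symm)
end

section
/- Let T = {0,1} and L a set of conditions with all exponents p(t), q(t) ≥ 2. Suppose f violates some condition of L at cell (i,j), and (i,j) has minimal weight i+j among all violating cells. Then there is a modification of f changing only values at cells (i,j), (i-1,j), (i,j-1) such that the new tiling has no violation at any cell of weight < i+j, and either the minimal weight of violating cells strictly increases or the number of violating cells of weight i+j strictly decreases. -/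
lemma vioAny_congr {p q : Fin 2 → ℕ} {f g : ℕ → ℕ → Fin 2} {i j : ℕ}
    (hH : ∀ s, g (i - s) j = f (i - s) j)
    (hV : ∀ s, g i (j - s) = f i (j - s)) :
    vioAny p q g i j ↔ vioAny p q f i j := by
  constructor
  · rintro ⟨u, ⟨h1, h2⟩ | ⟨h1, h2⟩⟩
    · exact ⟨u, Or.inl ⟨h1, fun s hs => (hH s).symm.trans (h2 s hs)⟩⟩
    · exact ⟨u, Or.inr ⟨h1, fun s hs => (hV s).symm.trans (h2 s hs)⟩⟩
  · rintro ⟨u, ⟨h1, h2⟩ | ⟨h1, h2⟩⟩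
    · exact ⟨u, Or.inl ⟨h1, fun s hs => (hH s).trans (h2 s hs)⟩⟩
    · exact ⟨u, Or.inr ⟨h1, fun s hs => (hV s).trans (h2 s hs)⟩⟩

lemma count_lt {p q : Fin 2 → ℕ} {f g : ℕ → ℕ → Fin 2} {m n i j : ℕ}
    (hsub : ∀ a b, a < m → b < n → a + b = i + j → vioAny p q g a b → vioAny p q f a b)
    (him : i < m) (hjn : j < n) (hf : vioAny p q f i j) (hg : ¬ vioAny p q g i j) :
    Set.ncard {c : ℕ × ℕ | c.1 < m ∧ c.2 < n ∧ c.1 + c.2 = i + j ∧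
        vioAny p q g c.1 c.2} <
      Set.ncard {c : ℕ × ℕ | c.1 < m ∧ c.2 < n ∧ c.1 + c.2 = i + j ∧
        vioAny p q f c.1 c.2} := by
  have hfin : {c : ℕ × ℕ | c.1 < m ∧ c.2 < n ∧ c.1 + c.2 = i + j ∧
      vioAny p q f c.1 c.2}.Finite :=
    Set.Finite.subset ((Set.finite_Iio m).prod (Set.finite_Iio n))
      (fun c hc => ⟨hc.1, hc.2.1⟩)
  apply Set.ncard_lt_ncard ?_ hfin
  rw [Set.ssubset_def]
  refine ⟨?_, ?_⟩
  · rintro ⟨a, b⟩ ⟨h1, h2, h3, h4⟩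
    exact ⟨h1, h2, h3, hsub a b h1 h2 h3 h4⟩
  · intro hsup
    have hmem : ((i, j) : ℕ × ℕ) ∈ {c : ℕ × ℕ | c.1 < m ∧ c.2 < n ∧ c.1 + c.2 = i + j ∧
        vioAny p q f c.1 c.2} := ⟨him, hjn, rfl, hf⟩
    exact hg (hsup hmem).2.2.2

/-- Progress lemma: a violation at a minimal-weight cell can be repaired by
changing only `(i,j)`, `(i-1,j)`, `(i,j-1)`, without creating violations at
smaller weight, so that either the minimal weight of violating cells strictly
increases or their number at weight `i+j` strictly decreases. -/
theorem stmt6 (m n : ℕ) (p q : Fin 2 → ℕ)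
    (hp : ∀ t, 2 ≤ p t) (hq : ∀ t, 2 ≤ q t)
    (f : ℕ → ℕ → Fin 2) (i j : ℕ) (him : i < m) (hjn : j < n)
    (hvio : vioAny p q f i j)
    (hmin : ∀ i' j', i' < m → j' < n → i' + j' < i + j → ¬ vioAny p q f i' j') :
    ∃ g : ℕ → ℕ → Fin 2,
      (∀ i' j', (i', j') ≠ (i, j) → (i', j') ≠ (i-1, j) → (i', j') ≠ (i, j-1) →
        g i' j' = f i' j') ∧
      (∀ i' j', i' < m → j' < n → i' + j' < i + j → ¬ vioAny p q g i' j') ∧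
      ((∀ i' j', i' < m → j' < n → i' + j' ≤ i + j → ¬ vioAny p q g i' j') ∨
        Set.ncard {c : ℕ × ℕ | c.1 < m ∧ c.2 < n ∧ c.1 + c.2 = i + j ∧
            vioAny p q g c.1 c.2} <
          Set.ncard {c : ℕ × ℕ | c.1 < m ∧ c.2 < n ∧ c.1 + c.2 = i + j ∧
            vioAny p q f c.1 c.2}) := by
  by_cases hcase : ∃ u : Fin 2,
      ¬ (p u ≤ i ∧ ∀ s, 1 ≤ s → s ≤ p u → f (i-s) j = u) ∧
      ¬ (q u ≤ j ∧ ∀ s, 1 ≤ s → s ≤ q u → f i (j-s) = u)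
  · -- Case 1: change only (i,j)
    obtain ⟨u, hnH, hnV⟩ := hcase
    set g : ℕ → ℕ → Fin 2 := fun a b => if (a, b) = (i, j) then u else f a b with hgdef
    have gval : g i j = u := by simp [hgdef]
    have gother : ∀ a b, ¬(a = i ∧ b = j) → g a b = f a b := by
      intro a b h1
      simp only [hgdef]
      rw [if_neg (by simp only [Prod.mk.injEq]; exact h1)]
    have hnov : ¬ vioAny p q g i j := by
      rintro ⟨v, ⟨h1, h2⟩ | ⟨h1, h2⟩⟩
      · have e0 := h2 0 (Nat.zero_le _)
        rw [Nat.sub_zero, gval] at e0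
        rw [← e0] at h1 h2
        have hpu := hp u
        apply hnH
        refine ⟨h1, fun s hs1 hs2 => ?_⟩
        rw [← gother (i - s) j (by omega)]
        exact h2 s hs2
      · have e0 := h2 0 (Nat.zero_le _)
        rw [Nat.sub_zero, gval] at e0
        rw [← e0] at h1 h2
        have hqu := hq u
        apply hnV
        refine ⟨h1, fun s hs1 hs2 => ?_⟩
        rw [← gother i (j - s) (by omega)]
        exact h2 s hs2
    have hsmall : ∀ a b, a < m → b < n → a + b < i + j → ¬ vioAny p q g a b := by
      intro a b ham hbn hab
      rw [vioAny_congr (fun s => gother _ _ (by omega)) (fun s => gother _ _ (by omega))]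
      exact hmin a b ham hbn hab
    have hsub : ∀ a b, a < m → b < n → a + b = i + j →
        vioAny p q g a b → vioAny p q f a b := by
      intro a b ham hbn hab hv
      by_cases hc1 : a = i ∧ b = j
      · obtain ⟨h1', h2'⟩ := hc1; subst h1'; subst h2'
        exact absurd hv hnov
      · rw [vioAny_congr (fun s => gother _ _ (by omega))
            (fun s => gother _ _ (by omega))] at hv
        exact hv
    exact ⟨g, fun a b h1 _ _ => gother a b
        (fun hc => h1 (by rw [hc.1, hc.2])), hsmall,
      Or.inr (count_lt hsub him hjn hvio hnov)⟩
  · -- Case 2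
    have hcase' : ∀ u : Fin 2,
        (p u ≤ i ∧ ∀ s, 1 ≤ s → s ≤ p u → f (i-s) j = u) ∨
        (q u ≤ j ∧ ∀ s, 1 ≤ s → s ≤ q u → f i (j-s) = u) := by
      intro u
      by_cases h1 : (p u ≤ i ∧ ∀ s, 1 ≤ s → s ≤ p u → f (i-s) j = u)
      · exact Or.inl h1
      · by_cases h2 : (q u ≤ j ∧ ∀ s, 1 ≤ s → s ≤ q u → f i (j-s) = u)
        · exact Or.inr h2
        · exact absurd ⟨u, h1, h2⟩ hcase
    have key : ∃ t t' : Fin 2, t' ≠ t ∧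
        (p t ≤ i ∧ ∀ s, 1 ≤ s → s ≤ p t → f (i-s) j = t) ∧
        (q t' ≤ j ∧ ∀ s, 1 ≤ s → s ≤ q t' → f i (j-s) = t') := by
      by_cases hA0 : p 0 ≤ i ∧ ∀ s, 1 ≤ s → s ≤ p 0 → f (i-s) j = (0 : Fin 2)
      · refine ⟨0, 1, by decide, hA0, ?_⟩
        rcases hcase' 1 with hA1 | hB1
        · exfalso
          have e0 := hA0.2 1 le_rfl (by have := hp 0; omega)
          have e1 := hA1.2 1 le_rfl (by have := hp 1; omega)
          rw [e0] at e1
          exact absurd e1 (by decide)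
        · exact hB1
      · rcases hcase' 0 with hA0' | hB0
        · exact absurd hA0' hA0
        · by_cases hA1 : p 1 ≤ i ∧ ∀ s, 1 ≤ s → s ≤ p 1 → f (i-s) j = (1 : Fin 2)
          · exact ⟨1, 0, by decide, hA1, hB0⟩
          · rcases hcase' 1 with hA1' | hB1
            · exact absurd hA1' hA1
            · exfalso
              have e0 := hB0.2 1 le_rfl (by have := hq 0; omega)
              have e1 := hB1.2 1 le_rfl (by have := hq 1; omega)
              rw [e0] at e1
              exact absurd e1 (by decide)
    obtain ⟨t, t', hne, hA, hB⟩ := key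
    have hpt : 2 ≤ p t := hp t
    have hqt' : 2 ≤ q t' := hq t'
    have hpi : p t ≤ i := hA.1
    have hqj : q t' ≤ j := hB.1
    have hi2 : 2 ≤ i := le_trans hpt hpi
    have hj2 : 2 ≤ j := le_trans hqt' hqj
    have fA1 : f (i-1) j = t := hA.2 1 le_rfl (by omega)
    have fA2 : f (i-2) j = t := hA.2 2 (by omega) (by omega)
    have fB1 : f i (j-1) = t' := hB.2 1 le_rfl (by omega)
    have fB2 : f i (j-2) = t' := hB.2 2 (by omega) (by omega)
    by_cases hF : ∀ s, 1 ≤ s → s ≤ q t' - 1 → f (i-1) (j-s) = t'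
    · -- Fix V : the horizontal run at row j-1 must be broken
      have hE : ¬ ∀ s, 1 ≤ s → s ≤ p t - 1 → f (i-s) (j-1) = t := by
        intro hEE
        exact hne ((hF 1 le_rfl (by omega)).symm.trans (hEE 1 le_rfl (by omega)))
      push_neg at hE
      obtain ⟨s₀, hs1, hs2, hs3⟩ := hE
      set g : ℕ → ℕ → Fin 2 := fun a b =>
        if (a, b) = (i, j) then t' else if (a, b) = (i, j-1) then t else f a b with hgdef
      have gval1 : g i j = t' := by simp [hgdef]
      have gval2 : g i (j-1) = t := by
        have hne' : ((i : ℕ), j - 1) ≠ (i, j) := by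
          simp only [ne_eq, Prod.mk.injEq]; omega
        simp [hgdef, hne']
        intro h
        exact absurd h (by omega)
      have gother : ∀ a b, ¬(a = i ∧ b = j) → ¬(a = i ∧ b = j - 1) → g a b = f a b := by
        intro a b h1 h2
        simp only [hgdef]
        rw [if_neg (by simp only [Prod.mk.injEq]; exact h1),
          if_neg (by simp only [Prod.mk.injEq]; exact h2)]
      have hnov : ¬ vioAny p q g i j := by
        rintro ⟨v, ⟨h1, h2⟩ | ⟨h1, h2⟩⟩
        · have e0 := h2 0 (Nat.zero_le _)
          rw [Nat.sub_zero, gval1] at e0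
          rw [← e0] at h2
          have e1 := h2 1 (by have := hp t'; omega)
          rw [gother (i-1) j (by omega) (by omega), fA1] at e1
          exact hne e1.symm
        · have e0 := h2 0 (Nat.zero_le _)
          rw [Nat.sub_zero, gval1] at e0
          rw [← e0] at h2
          have e1 := h2 1 (by omega)
          rw [gval2] at e1
          exact hne e1.symm
      have hnov2 : ¬ vioAny p q g i (j-1) := by
        rintro ⟨v, ⟨h1, h2⟩ | ⟨h1, h2⟩⟩
        · have e0 := h2 0 (Nat.zero_le _)
          rw [Nat.sub_zero, gval2] at e0
          rw [← e0] at h2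
          have e1 := h2 s₀ (by omega)
          rw [gother (i-s₀) (j-1) (by omega) (by omega)] at e1
          exact hs3 e1
        · have e0 := h2 0 (Nat.zero_le _)
          rw [Nat.sub_zero, gval2] at e0
          rw [← e0] at h2
          have e1 := h2 1 (by have := hq t; omega)
          have hrw : j - 1 - 1 = j - 2 := by omega
          rw [hrw, gother i (j-2) (by omega) (by omega), fB2] at e1
          exact hne e1
      have hsmall : ∀ a b, a < m → b < n → a + b < i + j → ¬ vioAny p q g a b := by
        intro a b ham hbn hab
        by_cases hc : a = i ∧ b = j - 1
        · obtain ⟨h1', h2'⟩ := hc; subst h1'; subst h2'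
          exact hnov2
        · rw [vioAny_congr (fun s => gother _ _ (by omega) (by omega))
              (fun s => gother _ _ (by omega) (by omega))]
          exact hmin a b ham hbn hab
      have hsub : ∀ a b, a < m → b < n → a + b = i + j →
          vioAny p q g a b → vioAny p q f a b := by
        intro a b ham hbn hab hv
        by_cases hc1 : a = i ∧ b = j
        · obtain ⟨h1', h2'⟩ := hc1; subst h1'; subst h2'
          exact absurd hv hnov
        · by_cases hc2 : a = i + 1 ∧ b = j - 1
          · obtain ⟨h1', h2'⟩ := hc2; subst h1'; subst h2'
            obtain ⟨v, ⟨h1, h2⟩ | ⟨h1, h2⟩⟩ := hv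
            · exfalso
              have e1 := h2 1 (by have := hp v; omega)
              have hrw : i + 1 - 1 = i := by omega
              rw [hrw, gval2] at e1
              rw [← e1] at h2
              have e2 := h2 (s₀ + 1) (by omega)
              have hrw2 : i + 1 - (s₀ + 1) = i - s₀ := by omega
              rw [hrw2, gother (i-s₀) (j-1) (by omega) (by omega)] at e2
              exact hs3 e2
            · refine ⟨v, Or.inr ⟨h1, fun s hs => ?_⟩⟩
              rw [← gother (i+1) (j-1-s) (by omega) (by omega)]
              exact h2 s hs
          · rw [vioAny_congr (fun s => gother _ _ (by omega) (by omega))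
                (fun s => gother _ _ (by omega) (by omega))] at hv
            exact hv
      exact ⟨g, fun a b h1 _ h3 => gother a b
          (fun hc => h1 (by rw [hc.1, hc.2]))
          (fun hc => h3 (by rw [hc.1, hc.2])), hsmall,
        Or.inr (count_lt hsub him hjn hvio hnov)⟩
    · -- Fix H : break the horizontal run of t's at row j
      push_neg at hF
      obtain ⟨s₀, hs1, hs2, hs3⟩ := hF
      set g : ℕ → ℕ → Fin 2 := fun a b =>
        if (a, b) = (i, j) then t else if (a, b) = (i-1, j) then t' else f a b with hgdef
      have gval1 : g i j = t := by simp [hgdef]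
      have gval2 : g (i-1) j = t' := by
        have hne' : ((i : ℕ) - 1, j) ≠ (i, j) := by
          simp only [ne_eq, Prod.mk.injEq]; omega
        simp [hgdef, hne']
        intro h
        exact absurd h (by omega)
      have gother : ∀ a b, ¬(a = i ∧ b = j) → ¬(a = i - 1 ∧ b = j) → g a b = f a b := by
        intro a b h1 h2
        simp only [hgdef]
        rw [if_neg (by simp only [Prod.mk.injEq]; exact h1),
          if_neg (by simp only [Prod.mk.injEq]; exact h2)]
      have hnov : ¬ vioAny p q g i j := by
        rintro ⟨v, ⟨h1, h2⟩ | ⟨h1, h2⟩⟩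
        · have e0 := h2 0 (Nat.zero_le _)
          rw [Nat.sub_zero, gval1] at e0
          rw [← e0] at h2
          have e1 := h2 1 (by omega)
          rw [gval2] at e1
          exact hne e1
        · have e0 := h2 0 (Nat.zero_le _)
          rw [Nat.sub_zero, gval1] at e0
          rw [← e0] at h2
          have e1 := h2 1 (by have := hq t; omega)
          rw [gother i (j-1) (by omega) (by omega), fB1] at e1
          exact hne e1
      have hnov2 : ¬ vioAny p q g (i-1) j := by
        rintro ⟨v, ⟨h1, h2⟩ | ⟨h1, h2⟩⟩
        · have e0 := h2 0 (Nat.zero_le _)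
          rw [Nat.sub_zero, gval2] at e0
          rw [← e0] at h2
          have e1 := h2 1 (by have := hp t'; omega)
          have hrw : i - 1 - 1 = i - 2 := by omega
          rw [hrw, gother (i-2) j (by omega) (by omega), fA2] at e1
          exact hne e1.symm
        · have e0 := h2 0 (Nat.zero_le _)
          rw [Nat.sub_zero, gval2] at e0
          rw [← e0] at h2
          have e1 := h2 s₀ (by omega)
          rw [gother (i-1) (j-s₀) (by omega) (by omega)] at e1
          exact hs3 e1
      have hsmall : ∀ a b, a < m → b < n → a + b < i + j → ¬ vioAny p q g a b := by
        intro a b ham hbn hab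
        by_cases hc : a = i - 1 ∧ b = j
        · obtain ⟨h1', h2'⟩ := hc; subst h1'; subst h2'
          exact hnov2
        · rw [vioAny_congr (fun s => gother _ _ (by omega) (by omega))
              (fun s => gother _ _ (by omega) (by omega))]
          exact hmin a b ham hbn hab
      have hsub : ∀ a b, a < m → b < n → a + b = i + j →
          vioAny p q g a b → vioAny p q f a b := by
        intro a b ham hbn hab hv
        by_cases hc1 : a = i ∧ b = j
        · obtain ⟨h1', h2'⟩ := hc1; subst h1'; subst h2'
          exact absurd hv hnov
        · by_cases hc2 : a = i - 1 ∧ b = j + 1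
          · obtain ⟨h1', h2'⟩ := hc2; subst h1'; subst h2'
            obtain ⟨v, ⟨h1, h2⟩ | ⟨h1, h2⟩⟩ := hv
            · refine ⟨v, Or.inl ⟨h1, fun s hs => ?_⟩⟩
              rw [← gother (i-1-s) (j+1) (by omega) (by omega)]
              exact h2 s hs
            · exfalso
              have e1 := h2 1 (by have := hq v; omega)
              have hrw : j + 1 - 1 = j := by omega
              rw [hrw, gval2] at e1
              rw [← e1] at h2
              have e2 := h2 (s₀ + 1) (by omega)
              have hrw2 : j + 1 - (s₀ + 1) = j - s₀ := by omega
              rw [hrw2, gother (i-1) (j-s₀) (by omega) (by omega)] at e2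
              exact hs3 e2
          · rw [vioAny_congr (fun s => gother _ _ (by omega) (by omega))
                (fun s => gother _ _ (by omega) (by omega))] at hv
            exact hv
      exact ⟨g, fun a b h1 h2 _ => gother a b
          (fun hc => h1 (by rw [hc.1, hc.2]))
          (fun hc => h2 (by rw [hc.1, hc.2])), hsmall,
        Or.inr (count_lt hsub him hjn hvio hnov)⟩
end
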